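/- For all nonnegative integers k, l with k ≥ l+1 and all complex numbers a, b, a′, b′, the recurrence f_{k,l+1}(a,b,a′,b′) = ((a+a′)/(l+1))·f_{k,l}(a,b,a′,b′) + (1/(l+1))·f_{k−1,l}(a,b,a′,b′) holds. -/

import Mathlib

open scoped BigOperators

/-- Generalized Laguerre polynomial `L_n^m(x) = Σ_{q=0}^n C(n+m, n−q)·(−x)^q/q!`. -/
noncomputable def lag (n m : ℕ) (x : ℂ) : ℂ :=
  ∑ q ∈ Finset.range (n + 1), ((n + m).choose (n - q) : ℂ) * (-x) ^ q / (q.factorial : ℂ)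

/-- `f_{kl}(a,b,a′,b′)`. -/
noncomputable def fkl (k l : ℕ) (a b a' b' : ℂ) : ℂ :=
  Complex.exp (a * b') * (a + a') ^ (l - min k l) * (b + b') ^ (k - min k l) *
    lag (min k l) (Nat.dist k l) (-((a + a') * (b + b'))) / ((max k l).factorial : ℂ)

lemma key (k l : ℕ) (h : l + 1 ≤ k) (X : ℂ) :
    (l + 1 : ℂ) * lag (l + 1) (k - (l + 1)) (-X) =
      X * lag l (k - l) (-X) + (k : ℂ) * lag l (k - 1 - l) (-X) := by
  have hk : 1 ≤ k := le_trans (Nat.le_add_left 1 l) h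
  have hlk : l ≤ k := le_trans (Nat.le_succ l) h
  have hlk1 : l ≤ k - 1 := Nat.le_sub_one_of_lt h
  unfold lag
  simp only [neg_neg]
  rw [Nat.add_sub_cancel' h, Nat.add_sub_cancel' hlk, Nat.add_sub_cancel' hlk1,
    Finset.mul_sum]
  have split : ∀ q ∈ Finset.range (l + 1 + 1),
      (l + 1 : ℂ) * ((k.choose (l + 1 - q) : ℂ) * X ^ q / (q.factorial : ℂ)) =
      ((l + 1 - q : ℕ) : ℂ) * ((k.choose (l + 1 - q) : ℂ) * X ^ q / (q.factorial : ℂ)) +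
      (q : ℂ) * ((k.choose (l + 1 - q) : ℂ) * X ^ q / (q.factorial : ℂ)) := by
    intro q hq
    rw [Finset.mem_range] at hq
    have : ((l + 1 - q : ℕ) : ℂ) = (l + 1 : ℂ) - (q : ℂ) := by
      have := Nat.lt_succ_iff.mp hq
      push_cast [Nat.cast_sub this]
      ring
    rw [this]; ring
  rw [Finset.sum_congr rfl split, Finset.sum_add_distrib, add_comm]
  congr 1
  · -- q-part gives X * lag l (k-l)
    rw [Finset.sum_range_succ']
    simp only [Nat.cast_zero, zero_mul, add_zero, Finset.mul_sum]
    refine Finset.sum_congr rfl fun q hq => ?_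
    have h1 : l + 1 - (q + 1) = l - q := Nat.succ_sub_succ l q
    have h2 : ((q + 1).factorial : ℂ) = (q + 1 : ℂ) * (q.factorial : ℂ) := by
      rw [Nat.factorial_succ]; push_cast; ring
    have hq0 : (q : ℂ) + 1 ≠ 0 := Nat.cast_add_one_ne_zero q
    have hfq : (q.factorial : ℂ) ≠ 0 := Nat.cast_ne_zero.mpr q.factorial_ne_zero
    rw [h1, h2]
    push_cast
    field_simp
    ring
  · -- (l+1-q)-part gives k * lag l (k-1-l)
    rw [Finset.sum_range_succ]
    simp only [Nat.sub_self, Nat.cast_zero, zero_mul, add_zero, Finset.mul_sum]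
    refine Finset.sum_congr rfl fun q hq => ?_
    rw [Finset.mem_range] at hq
    have hql : q ≤ l := Nat.lt_succ_iff.mp hq
    have h1 : l + 1 - q = (l - q) + 1 := by omega
    have hnat : (l - q + 1) * k.choose (l - q + 1) = k * (k - 1).choose (l - q) := by
      have h2 := Nat.add_one_mul_choose_eq (k - 1) (l - q)
      have h3 : k - 1 + 1 = k := Nat.succ_pred_eq_of_pos hk
      rw [h3] at h2
      simpa [Nat.succ_eq_add_one, mul_comm] using h2.symm
    rw [h1]
    have : ((l - q + 1 : ℕ) : ℂ) * (k.choose (l - q + 1) : ℂ)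
        = (k : ℂ) * ((k - 1).choose (l - q) : ℂ) := by
      exact_mod_cast congrArg (Nat.cast : ℕ → ℂ) hnat
    calc ((l - q + 1 : ℕ) : ℂ) * ((k.choose (l - q + 1) : ℂ) * X ^ q / (q.factorial : ℂ))
        = (((l - q + 1 : ℕ) : ℂ) * (k.choose (l - q + 1) : ℂ)) * X ^ q / (q.factorial : ℂ) := by
          ring
      _ = ((k : ℂ) * ((k - 1).choose (l - q) : ℂ)) * X ^ q / (q.factorial : ℂ) := by rw [this]
      _ = (k : ℂ) * (((k - 1).choose (l - q) : ℂ) * X ^ q / (q.factorial : ℂ)) := by ring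

/-- For `k ≥ l+1`, the recurrence
`f_{k,l+1} = ((a+a′)/(l+1))·f_{k,l} + (1/(l+1))·f_{k−1,l}` holds. -/
theorem f_rec (k l : ℕ) (hkl : l + 1 ≤ k) (a b a' b' : ℂ) :
    fkl k (l + 1) a b a' b' =
      ((a + a') / (l + 1 : ℂ)) * fkl k l a b a' b' +
        (1 / (l + 1 : ℂ)) * fkl (k - 1) l a b a' b' := by
  have hk : 1 ≤ k := le_trans (Nat.le_add_left 1 l) hkl
  have hlk : l ≤ k := le_trans (Nat.le_succ l) hkl
  have hlk1 : l ≤ k - 1 := Nat.le_sub_one_of_lt hkl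
  unfold fkl
  rw [min_eq_right hkl, min_eq_right hlk, min_eq_right hlk1,
    max_eq_left hkl, max_eq_left hlk, max_eq_left hlk1,
    Nat.dist_eq_sub_of_le_right hkl, Nat.dist_eq_sub_of_le_right hlk,
    Nat.dist_eq_sub_of_le_right hlk1]
  simp only [Nat.sub_self, pow_zero, mul_one, one_mul]
  have hXkey := key k l hkl ((a + a') * (b + b'))
  set A := a + a' with hA
  set B := b + b' with hB
  set E := Complex.exp (a * b') with hE
  set L1 := lag (l + 1) (k - (l + 1)) (-(A * B)) with hL1
  set L2 := lag l (k - l) (-(A * B)) with hL2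
  set L3 := lag l (k - 1 - l) (-(A * B)) with hL3
  have hpow : B ^ (k - l) = B ^ (k - (l + 1)) * B := by
    rw [← pow_succ]
    congr 1
    omega
  have hsub : k - 1 - l = k - (l + 1) := by omega
  have hfac : (k.factorial : ℂ) = (k : ℂ) * ((k - 1).factorial : ℂ) := by
    rw [← Nat.mul_factorial_pred (by omega : k ≠ 0)]
    push_cast
    ring
  have hl0 : (l : ℂ) + 1 ≠ 0 := Nat.cast_add_one_ne_zero l
  have hf0 : ((k - 1).factorial : ℂ) ≠ 0 := Nat.cast_ne_zero.mpr (k - 1).factorial_ne_zero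
  have hk0 : (k : ℂ) ≠ 0 := Nat.cast_ne_zero.mpr (by omega)
  rw [hsub, hpow, hfac]
  have hL1eq : L1 = (A * B * L2 + (k : ℂ) * L3) / ((l : ℂ) + 1) := by
    field_simp
    linear_combination hXkey
  rw [hL1eq]
  field_simp
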